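/- Let V be a strongly irregular variety of a plural type τ and let S_τ be the variety of type τ equivalent to the variety of semilattices. Then the Mal'tsev product V ∘ S_τ is a variety. -/

import Mathlib

structure Signature where
  symbols : Type
  arity : symbols → ℕ

structure Alg (S : Signature) where
  carrier : Type
  op : ∀ ω : S.symbols, (Fin (S.arity ω) → carrier) → carrier
  nonempty : Nonempty carrier

inductive Term (S : Signature) (X : Type) : Type
  | var : X → Term S X
  | app : ∀ ω : S.symbols, (Fin (S.arity ω) → Term S X) → Term S X

def Term.eval {S : Signature} {X : Type} (A : Alg S) (env : X → A.carrier) :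
    Term S X → A.carrier
  | .var x => env x
  | .app ω ts => A.op ω fun i => (ts i).eval A env

/-- The algebra `A` satisfies the identity `u = v`. -/
def Alg.sat {S : Signature} (A : Alg S) {X : Type} (u v : Term S X) : Prop :=
  ∀ env : X → A.carrier, u.eval A env = v.eval A env

/-- An identity: a pair of terms in the countably many variables `x₀, x₁, …`. -/
abbrev Ident (S : Signature) := Term S ℕ × Term S ℕ

/-- `A` lies in the variety axiomatized by the set of identities `E`. -/
def Alg.Models {S : Signature} (A : Alg S) (E : Set (Ident S)) : Prop :=
  ∀ e ∈ E, A.sat e.1 e.2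

/-- The identity `u = v` holds in the variety axiomatized by `E`. -/
def Conseq {S : Signature} (E : Set (Ident S)) {X : Type} (u v : Term S X) : Prop :=
  ∀ A : Alg S, A.Models E → A.sat u v

/-- `a` is an idempotent element of `A`. -/
def Alg.IsIdem {S : Signature} (A : Alg S) (a : A.carrier) : Prop :=
  ∀ ω : S.symbols, A.op ω (fun _ => a) = a

/-- `B` is (the universe of) a subalgebra of `A`. -/
def Alg.IsSubuniverse {S : Signature} (A : Alg S) (B : Set A.carrier) : Prop :=
  ∀ ω (a : Fin (S.arity ω) → A.carrier), (∀ i, a i ∈ B) → A.op ω a ∈ B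

/-- The subalgebra of `A` on a nonempty subuniverse `B`. -/
def Alg.subAlg {S : Signature} (A : Alg S) (B : Set A.carrier)
    (h : A.IsSubuniverse B) (hne : B.Nonempty) : Alg S where
  carrier := B
  op ω a := ⟨A.op ω fun i => (a i : A.carrier), h ω _ fun i => (a i).2⟩
  nonempty := hne.to_subtype

/-- A congruence of `A`: an equivalence relation compatible with all operations. -/
structure Congruence {S : Signature} (A : Alg S) where
  rel : A.carrier → A.carrier → Prop
  iseqv : Equivalence rel
  compat : ∀ ω (a b : Fin (S.arity ω) → A.carrier),
    (∀ i, rel (a i) (b i)) → rel (A.op ω a) (A.op ω b)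

def Congruence.setoid {S : Signature} {A : Alg S} (θ : Congruence A) :
    Setoid A.carrier := ⟨θ.rel, θ.iseqv⟩

/-- The quotient algebra `A/θ`. -/
noncomputable def Alg.quot {S : Signature} (A : Alg S) (θ : Congruence A) : Alg S where
  carrier := Quotient θ.setoid
  op ω q := Quotient.mk θ.setoid (A.op ω fun i => (q i).out)
  nonempty := A.nonempty.map (Quotient.mk θ.setoid)

/-- Membership in the Mal'tsev product of the varieties axiomatized by `V` and `W`:
`A` has a congruence `θ` with `A/θ` in (the variety of) `W` such that every
`θ`-class which is a subalgebra of `A` is an algebra in (the variety of) `V`. -/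
def InMaltsev {S : Signature} (V W : Set (Ident S)) (A : Alg S) : Prop :=
  ∃ θ : Congruence A, (A.quot θ).Models W ∧
    ∀ a : A.carrier, ∀ h : A.IsSubuniverse {b | θ.rel a b},
      (A.subAlg {b | θ.rel a b} h ⟨a, θ.iseqv.refl a⟩).Models V

/-- A class of algebras is a variety iff it is axiomatized by some set of identities. -/
def IsVarietyClass {S : Signature} (K : Alg S → Prop) : Prop :=
  ∃ E : Set (Ident S), ∀ A : Alg S, K A ↔ A.Models E

/-- The set of variables occurring in a term. -/
def Term.vars {S : Signature} {X : Type} : Term S X → Set X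
  | .var x => {x}
  | .app _ ts => ⋃ i, (ts i).vars

/-- An identity is regular if both sides contain exactly the same variables. -/
def Regular {S : Signature} (e : Ident S) : Prop := e.1.vars = e.2.vars

namespace MP13

def pair {α : Type _} (a b : α) : Fin 2 → α := fun i => if i = 0 then a else b

@[simp] lemma pair_zero {α : Type _} (a b : α) : pair a b 0 = a := rfl

@[simp] lemma pair_one {α : Type _} (a b : α) : pair a b 1 = b := rfl

lemma pair_comp {α β : Type _} (f : α → β) (a b : α) :
    (fun i => f (pair a b i)) = pair (f a) (f b) := by
  funext i
  unfold pair
  split <;> rfl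

lemma pair_eta {α : Type _} (env : Fin 2 → α) : pair (env 0) (env 1) = env := by
  funext i
  fin_cases i <;> rfl

def Term.subst {S : Signature} {X Y : Type} (σ : X → Term S Y) : Term S X → Term S Y
  | .var x => σ x
  | .app ω ts => .app ω fun i => Term.subst σ (ts i)

lemma eval_subst {S : Signature} {X Y : Type} (A : Alg S) (σ : X → Term S Y)
    (env : Y → A.carrier) (u : Term S X) :
    (Term.subst σ u).eval A env = u.eval A (fun x => (σ x).eval A env) := by
  induction u with
  | var x => rfl
  | app ω ts ih =>
    simp only [Term.subst, Term.eval]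
    congr 1
    funext i
    exact ih i

lemma vars_subst {S : Signature} {X Y : Type} (σ : X → Term S Y) (u : Term S X) :
    (Term.subst σ u).vars = ⋃ x ∈ u.vars, (σ x).vars := by
  induction u with
  | var x => simp [Term.subst, Term.vars]
  | app ω ts ih =>
    simp only [Term.subst, Term.vars]
    ext y
    simp only [Set.mem_iUnion]
    constructor
    · rintro ⟨i, hy⟩
      rw [ih i] at hy
      simp only [Set.mem_iUnion] at hy
      obtain ⟨x, hx, hy⟩ := hy
      exact ⟨x, ⟨i, hx⟩, hy⟩
    · rintro ⟨x, ⟨i, hx⟩, hy⟩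
      refine ⟨i, ?_⟩
      rw [ih i]
      simp only [Set.mem_iUnion]
      exact ⟨x, hx, hy⟩

lemma eval_agree {S : Signature} {X : Type} (A : Alg S) (e₁ e₂ : X → A.carrier)
    (u : Term S X) (h : ∀ x ∈ u.vars, e₁ x = e₂ x) :
    u.eval A e₁ = u.eval A e₂ := by
  induction u with
  | var x => exact h x rfl
  | app ω ts ih =>
    simp only [Term.eval]
    congr 1
    funext i
    exact ih i fun x hx => h x (Set.mem_iUnion.2 ⟨i, hx⟩)

lemma vars_nonempty {S : Signature} (h0 : ∀ ω : S.symbols, 0 < S.arity ω)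
    {X : Type} (u : Term S X) : u.vars.Nonempty := by
  induction u with
  | var x => exact ⟨x, rfl⟩
  | app ω ts ih =>
    obtain ⟨y, hy⟩ := ih ⟨0, h0 ω⟩
    exact ⟨y, Set.mem_iUnion.2 ⟨⟨0, h0 ω⟩, hy⟩⟩

def sval {S : Signature} {A : Alg S} {B : Set A.carrier} {h : A.IsSubuniverse B}
    {hne : B.Nonempty} (x : (A.subAlg B h hne).carrier) : A.carrier :=
  Subtype.val (x : B)

lemma smem {S : Signature} {A : Alg S} {B : Set A.carrier} {h : A.IsSubuniverse B}
    {hne : B.Nonempty} (x : (A.subAlg B h hne).carrier) : sval x ∈ B :=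
  (x : B).2

lemma eval_sub {S : Signature} (A : Alg S) (B : Set A.carrier) (h : A.IsSubuniverse B)
    (hne : B.Nonempty) {X : Type} (env : X → (A.subAlg B h hne).carrier) (u : Term S X) :
    sval (u.eval (A.subAlg B h hne) env) = u.eval A (fun x => sval (env x)) := by
  induction u with
  | var x => rfl
  | app ω ts ih =>
    simp only [Term.eval, Alg.subAlg, sval]
    congr 1
    funext i
    exact ih i

lemma eval_quot {S : Signature} (A : Alg S) (θ : Congruence A) {X : Type}
    (env : X → Quotient θ.setoid) (u : Term S X) :
    u.eval (A.quot θ) env = Quotient.mk θ.setoid (u.eval A (fun x => (env x).out)) := by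
  induction u with
  | var x => exact (Quotient.out_eq _).symm
  | app ω ts ih =>
    show Quotient.mk θ.setoid (A.op ω fun i => (Term.eval (A.quot θ) env (ts i)).out) = _
    apply Quotient.sound
    apply θ.compat
    intro i
    have : Term.eval (A.quot θ) env (ts i) = Quotient.mk θ.setoid ((ts i).eval A (fun x => (env x).out)) := ih i
    have h2 : Quotient.mk θ.setoid ((Term.eval (A.quot θ) env (ts i)).out) =
        Quotient.mk θ.setoid ((ts i).eval A (fun x => (env x).out)) := by
      erw [Quotient.out_eq, this]
    exact Quotient.exact h2

lemma eval_congr {S : Signature} (A : Alg S) (θ : Congruence A) {X : Type}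
    (e₁ e₂ : X → A.carrier) (h : ∀ x, θ.rel (e₁ x) (e₂ x)) (u : Term S X) :
    θ.rel (u.eval A e₁) (u.eval A e₂) := by
  induction u with
  | var x => exact h x
  | app ω ts ih => exact θ.compat ω _ _ ih

def tApp {S : Signature} (t : Term S (Fin 2)) (A : Alg S) (a b : A.carrier) : A.carrier :=
  t.eval A (pair a b)

lemma eval_t2 {S : Signature} (t : Term S (Fin 2)) (A : Alg S) {Y : Type}
    (u v : Term S Y) (env : Y → A.carrier) :
    (Term.subst (pair u v) t).eval A env = tApp t A (u.eval A env) (v.eval A env) := by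
  rw [eval_subst]
  unfold tApp
  congr 1
  exact pair_comp (fun s : Term S Y => s.eval A env) u v

lemma vars_t2 {S : Signature} (t : Term S (Fin 2)) (ht : t.vars = Set.univ) {Y : Type}
    (u v : Term S Y) : (Term.subst (pair u v) t).vars = u.vars ∪ v.vars := by
  rw [vars_subst, ht]
  ext y
  simp only [Set.mem_iUnion, Set.mem_univ, Set.mem_union, exists_prop, true_and]
  constructor
  · rintro ⟨i, hi⟩
    unfold pair at hi
    split at hi
    · exact Or.inl hi
    · exact Or.inr hi
  · rintro (h | h)
    · exact ⟨0, h⟩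
    · exact ⟨1, h⟩

lemma out_rel {S : Signature} (A : Alg S) (θ : Congruence A) (a : A.carrier) :
    θ.rel ((Quotient.mk θ.setoid a).out) a := by
  have h : Quotient.mk θ.setoid ((Quotient.mk θ.setoid a).out) = Quotient.mk θ.setoid a :=
    Quotient.out_eq _
  exact Quotient.exact h

end MP13

open MP13

/-- Let `V` be a strongly irregular variety of a plural type
`τ` (defined by a set `R` of regular identities together with a strongly
irregular identity `t(x,y) = x`, where `t` contains both variables), and let
`S_τ` be the variety of type `τ` equivalent to the variety of semilattices (the
class of algebras satisfying exactly the regular identities of type `τ`). Then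
the Mal'tsev product `V ∘ S_τ` is a variety. -/
theorem stmt_13 (S : Signature) (h0 : ∀ ω : S.symbols, 0 < S.arity ω)
    (hplural : ∃ ω : S.symbols, 2 ≤ S.arity ω)
    (V : Set (Ident S)) (R : Set (Ident S))
    (hR : ∀ e ∈ R, Regular e)
    (t : Term S (Fin 2)) (ht : t.vars = Set.univ)
    (hV : ∀ A : Alg S, A.Models V ↔ (A.Models R ∧ A.sat t (Term.var 0))) :
    IsVarietyClass (InMaltsev V {e : Ident S | Regular e}) := by
  classical
  refine ⟨{e | (∃ u v : Term S ℕ, u.vars = v.vars ∧ e = (Term.subst (pair u v) t, u)) ∨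
      (∃ p q σ, (p, q) ∈ R ∧ (∀ m ∈ p.vars, ∀ n ∈ p.vars, (σ m).vars = (σ n).vars) ∧
        e = (Term.subst σ p, Term.subst σ q))}, fun A => ⟨?_, ?_⟩⟩
  · -- Forward direction
    rintro ⟨θ, hq, hcl⟩
    have hreg : ∀ u v : Term S ℕ, u.vars = v.vars → ∀ env : ℕ → A.carrier,
        θ.rel (u.eval A env) (v.eval A env) := by
      intro u v hvars env
      have hsat := hq (u, v) hvars (fun n => Quotient.mk θ.setoid (env n))
      rw [eval_quot, eval_quot] at hsat
      have h1 : θ.rel (u.eval A fun n => (Quotient.mk θ.setoid (env n)).out)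
          (v.eval A fun n => (Quotient.mk θ.setoid (env n)).out) := Quotient.exact hsat
      have hout : ∀ n : ℕ, θ.rel ((Quotient.mk θ.setoid (env n)).out) (env n) :=
        fun n => out_rel A θ (env n)
      have h2 := eval_congr A θ _ env hout u
      have h3 := eval_congr A θ _ env hout v
      exact θ.iseqv.trans (θ.iseqv.trans (θ.iseqv.symm h2) h1) h3
    have hidem : ∀ (ω : S.symbols) (a : A.carrier), θ.rel (A.op ω fun _ => a) a := by
      intro ω a
      have hv : (Term.app ω fun _ => (Term.var 0 : Term S ℕ)).vars
          = (Term.var 0 : Term S ℕ).vars := by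
        haveI : Nonempty (Fin (S.arity ω)) := ⟨⟨0, h0 ω⟩⟩
        simp [Term.vars]
      exact hreg _ _ hv (fun _ => a)
    have hsub : ∀ a : A.carrier, A.IsSubuniverse {b | θ.rel a b} := by
      intro a ω bs hb
      exact θ.iseqv.symm (θ.iseqv.trans
        (θ.compat ω _ _ fun i => θ.iseqv.symm (hb i)) (hidem ω a))
    have hVcl : ∀ a : A.carrier,
        (A.subAlg {b | θ.rel a b} (hsub a) ⟨a, θ.iseqv.refl a⟩).Models R ∧
        (A.subAlg {b | θ.rel a b} (hsub a) ⟨a, θ.iseqv.refl a⟩).sat t (Term.var 0) :=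
      fun a => (hV _).mp (hcl a (hsub a))
    have key : ∀ a b : A.carrier, θ.rel a b → tApp t A a b = a := by
      intro a b hab
      have hs := (hVcl a).2 (pair ⟨a, θ.iseqv.refl a⟩ ⟨b, hab⟩)
      have h2 := congrArg sval hs
      erw [eval_sub, eval_sub] at h2
      erw [show (fun x => sval (pair (⟨a, θ.iseqv.refl a⟩ :
          (A.subAlg {b | θ.rel a b} (hsub a) ⟨a, θ.iseqv.refl a⟩).carrier) ⟨b, hab⟩ x))
          = pair a b from pair_comp _ _ _] at h2
      exact h2
    rintro e (⟨u, v, hvars, rfl⟩ | ⟨p, q, σ, hpq, hσ, rfl⟩)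
    · intro env
      show (Term.subst (pair u v) t).eval A env = u.eval A env
      rw [eval_t2]
      exact key _ _ (hreg u v hvars env)
    · intro env
      show (Term.subst σ p).eval A env = (Term.subst σ q).eval A env
      rw [eval_subst, eval_subst]
      obtain ⟨n₀, hn₀⟩ := vars_nonempty h0 p
      have hrel : ∀ n ∈ p.vars, θ.rel ((σ n₀).eval A env) ((σ n).eval A env) :=
        fun n hn => hreg (σ n₀) (σ n) (hσ n₀ hn₀ n hn) env
      set a := (σ n₀).eval A env with ha
      set env2 : ℕ → (A.subAlg {b | θ.rel a b} (hsub a) ⟨a, θ.iseqv.refl a⟩).carrier :=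
        fun n => if hn : n ∈ p.vars then ⟨(σ n).eval A env, hrel n hn⟩
          else ⟨a, θ.iseqv.refl a⟩ with henv2
      have hs := (hVcl a).1 (p, q) hpq env2
      have h2 := congrArg sval hs
      erw [eval_sub, eval_sub] at h2
      have hqvars : q.vars = p.vars := ((hR (p, q) hpq)).symm
      calc p.eval A (fun n => (σ n).eval A env)
          = p.eval A (fun n => sval (env2 n)) := by
            refine eval_agree A _ _ p fun n hn => ?_
            simp only [henv2, dif_pos hn]
            erw [dif_pos hn]
            rfl
        _ = q.eval A (fun n => sval (env2 n)) := h2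
        _ = q.eval A (fun n => (σ n).eval A env) := by
            refine eval_agree A _ _ q fun n hn => ?_
            rw [hqvars] at hn
            simp only [henv2, dif_pos hn]
            erw [dif_pos hn]
            rfl
  · -- Backward direction
    intro hA
    have hE1 : ∀ (u v : Term S ℕ), u.vars = v.vars → ∀ env : ℕ → A.carrier,
        tApp t A (u.eval A env) (v.eval A env) = u.eval A env := by
      intro u v hvars env
      have hh := hA _ (Or.inl ⟨u, v, hvars, rfl⟩) env
      rwa [eval_t2] at hh
    have href : ∀ a : A.carrier, tApp t A a a = a := fun a =>
      hE1 (Term.var 0) (Term.var 0) rfl (fun _ => a)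
    have htrans : ∀ a b c : A.carrier, tApp t A a b = a → tApp t A b a = b →
        tApp t A b c = b → tApp t A c b = c → tApp t A a c = a := by
      intro a b c hab hba hbc hcb
      have hvars : (Term.subst (pair (Term.var 0)
            (Term.subst (pair (Term.var 1) (Term.var 2)) t)) t : Term S ℕ).vars
          = (Term.subst (pair (Term.var 2)
            (Term.subst (pair (Term.var 1) (Term.var 0)) t)) t : Term S ℕ).vars := by
        rw [vars_t2 t ht, vars_t2 t ht, vars_t2 t ht, vars_t2 t ht]
        show ({0} : Set ℕ) ∪ ({1} ∪ {2}) = {2} ∪ ({1} ∪ {0})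
        ext n; simp only [Set.mem_union, Set.mem_singleton_iff]; tauto
      have h1 := hE1 _ _ hvars (fun n => if n = 0 then a else if n = 1 then b else c)
      have h2 := hE1 _ _ hvars.symm (fun n => if n = 0 then a else if n = 1 then b else c)
      rw [eval_t2, eval_t2, eval_t2, eval_t2] at h1
      have hu : tApp t A a (tApp t A b c) = a := by rw [hbc]; exact hab
      have hv : tApp t A c (tApp t A b a) = c := by rw [hba]; exact hcb
      show tApp t A a c = a
      calc tApp t A a c
          = tApp t A (tApp t A a (tApp t A b c)) (tApp t A c (tApp t A b a)) := by
            rw [hu, hv]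
        _ = tApp t A a (tApp t A b c) := h1
        _ = a := hu
    have hcompat : ∀ (ω : S.symbols) (as bs : Fin (S.arity ω) → A.carrier),
        (∀ i, tApp t A (as i) (bs i) = as i ∧ tApp t A (bs i) (as i) = bs i) →
        tApp t A (A.op ω as) (A.op ω bs) = A.op ω as := by
      intro ω as bs hi
      obtain ⟨env, henv1, henv2⟩ : ∃ env : ℕ → A.carrier,
          (∀ i : Fin (S.arity ω), env (2 * (i : ℕ)) = as i) ∧
          (∀ i : Fin (S.arity ω), env (2 * (i : ℕ) + 1) = bs i) := by
        refine ⟨fun n => if hn : n / 2 < S.arity ω then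
            (if n % 2 = 0 then as ⟨n / 2, hn⟩ else bs ⟨n / 2, hn⟩) else as ⟨0, h0 ω⟩,
          fun i => ?_, fun i => ?_⟩
        · have h2 : 2 * (i : ℕ) / 2 = (i : ℕ) := by omega
          have hlt : 2 * (i : ℕ) / 2 < S.arity ω := by rw [h2]; exact i.2
          beta_reduce
          rw [dif_pos hlt, if_pos (by omega : 2 * (i : ℕ) % 2 = 0)]
          exact congrArg as (Fin.ext h2)
        · have h2 : (2 * (i : ℕ) + 1) / 2 = (i : ℕ) := by omega
          have hlt : (2 * (i : ℕ) + 1) / 2 < S.arity ω := by rw [h2]; exact i.2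
          beta_reduce
          rw [dif_pos hlt, if_neg (by omega : ¬ (2 * (i : ℕ) + 1) % 2 = 0)]
          exact congrArg bs (Fin.ext h2)
      have hvars : (Term.app ω fun i => Term.subst
            (pair (Term.var (2 * (i : ℕ))) (Term.var (2 * (i : ℕ) + 1))) t : Term S ℕ).vars
          = (Term.app ω fun i => Term.subst
            (pair (Term.var (2 * (i : ℕ) + 1)) (Term.var (2 * (i : ℕ)))) t : Term S ℕ).vars := by
        show (⋃ i, _) = (⋃ i, _)
        have e1 : ∀ i : Fin (S.arity ω), (Term.subst
            (pair (Term.var (2 * (i : ℕ))) (Term.var (2 * (i : ℕ) + 1))) t : Term S ℕ).vars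
            = {2 * (i : ℕ)} ∪ {2 * (i : ℕ) + 1} := fun i => vars_t2 t ht _ _
        have e2 : ∀ i : Fin (S.arity ω), (Term.subst
            (pair (Term.var (2 * (i : ℕ) + 1)) (Term.var (2 * (i : ℕ)))) t : Term S ℕ).vars
            = {2 * (i : ℕ) + 1} ∪ {2 * (i : ℕ)} := fun i => vars_t2 t ht _ _
        simp only [e1, e2]
        ext n
        simp only [Set.mem_iUnion, Set.mem_union, Set.mem_singleton_iff]
        exact ⟨fun ⟨i, h⟩ => ⟨i, h.symm⟩, fun ⟨i, h⟩ => ⟨i, h.symm⟩⟩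
      have h1 := hE1 _ _ hvars env
      have hu : (Term.app ω fun i => Term.subst
          (pair (Term.var (2 * (i : ℕ))) (Term.var (2 * (i : ℕ) + 1))) t : Term S ℕ).eval A env
          = A.op ω as := by
        show A.op ω _ = A.op ω as
        congr 1
        funext i
        rw [eval_t2]
        show tApp t A (env (2 * (i : ℕ))) (env (2 * (i : ℕ) + 1)) = as i
        rw [henv1 i, henv2 i]
        exact (hi i).1
      have hv : (Term.app ω fun i => Term.subst
          (pair (Term.var (2 * (i : ℕ) + 1)) (Term.var (2 * (i : ℕ)))) t : Term S ℕ).eval A env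
          = A.op ω bs := by
        show A.op ω _ = A.op ω bs
        congr 1
        funext i
        rw [eval_t2]
        show tApp t A (env (2 * (i : ℕ) + 1)) (env (2 * (i : ℕ))) = bs i
        rw [henv1 i, henv2 i]
        exact (hi i).2
      rw [hu, hv] at h1
      exact h1
    refine ⟨⟨fun a b => tApp t A a b = a ∧ tApp t A b a = b,
        ⟨fun a => ⟨href a, href a⟩, fun h => ⟨h.2, h.1⟩,
          fun h1 h2 => ⟨htrans _ _ _ h1.1 h1.2 h2.1 h2.2,
            htrans _ _ _ h2.2 h2.1 h1.2 h1.1⟩⟩,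
        fun ω as bs hi => ⟨hcompat ω as bs hi,
          hcompat ω bs as (fun i => ⟨(hi i).2, (hi i).1⟩)⟩⟩, ?_, ?_⟩
    · -- quotient models regular identities
      rintro ⟨u, v⟩ he env
      erw [eval_quot, eval_quot]
      exact Quotient.sound ⟨hE1 u v he _, hE1 v u (Eq.symm he) _⟩
    · -- congruence classes model V
      intro a hsubu
      rw [hV]
      constructor
      · rintro ⟨p, q⟩ hpq env
        apply Subtype.ext
        have h2 : p.eval A (fun n => sval (env n)) = q.eval A (fun n => sval (env n)) := by
          have hmem : ∀ n : ℕ, tApp t A a (sval (env n)) = a ∧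
              tApp t A (sval (env n)) a = sval (env n) := fun n => smem (env n)
          obtain ⟨hm1, hm2⟩ : tApp t A a (p.eval A fun n => sval (env n)) = a ∧
              tApp t A (p.eval A fun n => sval (env n)) a
                = p.eval A fun n => sval (env n) := by
            have hm := smem (Term.eval _ env p)
            erw [eval_sub] at hm
            exact hm
          have hfix : ∀ x : ℕ, (Term.subst (pair (Term.var x) p) t).eval A
              (fun n => sval (env n)) = sval (env x) := by
            intro x
            rw [eval_t2]
            exact htrans _ a _ (hmem x).2 (hmem x).1 hm1 hm2
          have hσ : ∀ m ∈ p.vars, ∀ n ∈ p.vars,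
              (Term.subst (pair (Term.var m) p) t).vars
              = (Term.subst (pair (Term.var n) p) t).vars := by
            intro m hm n hn
            rw [vars_t2 t ht, vars_t2 t ht]
            show ({m} : Set ℕ) ∪ p.vars = {n} ∪ p.vars
            rw [Set.union_eq_self_of_subset_left (Set.singleton_subset_iff.2 hm),
              Set.union_eq_self_of_subset_left (Set.singleton_subset_iff.2 hn)]
          have hid := hA _ (Or.inr ⟨p, q, fun n => Term.subst (pair (Term.var n) p) t,
            hpq, hσ, rfl⟩) (fun n => sval (env n))
          rw [eval_subst, eval_subst] at hid
          calc p.eval A (fun n => sval (env n))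
              = p.eval A (fun x => (Term.subst (pair (Term.var x) p) t).eval A
                  (fun n => sval (env n))) :=
                (eval_agree A _ _ p fun x _ => hfix x).symm
            _ = q.eval A (fun x => (Term.subst (pair (Term.var x) p) t).eval A
                  (fun n => sval (env n))) := hid
            _ = q.eval A (fun n => sval (env n)) := eval_agree A _ _ q fun x _ => hfix x
        have h2 := (eval_sub _ _ _ _ env p).trans (h2.trans (eval_sub _ _ _ _ env q).symm)
        exact h2
      · intro env
        apply Subtype.ext
        have h1 : (fun x => sval (env x)) = pair (sval (env 0)) (sval (env 1)) := by
          funext i; fin_cases i <;> rfl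
        have h2 : t.eval A (fun x => sval (env x)) = sval (env 0) := by
          rw [h1]
          obtain ⟨ha1, ha2⟩ : tApp t A a (sval (env 0)) = a ∧
              tApp t A (sval (env 0)) a = sval (env 0) := smem (env 0)
          obtain ⟨hb1, hb2⟩ : tApp t A a (sval (env 1)) = a ∧
              tApp t A (sval (env 1)) a = sval (env 1) := smem (env 1)
          exact htrans _ a _ ha2 ha1 hb1 hb2
        have h2 := (eval_sub _ _ _ _ env t).trans h2
        exact h2
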